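/- For a finite set 𝒜 ⊂ M, the irrational affine toric variety X_𝒜 equals the binomial variety 𝒵_𝒜 = {z ∈ ℝ≥0^𝒜 : z^u = z^v whenever u, v ∈ ℝ≥0^𝒜 satisfy 𝒜u = 𝒜v}. -/

import Mathlib

open Real

/-- The irrational affine toric variety `X_𝒜`: the closure in `ℝ≥0^𝒜` of the image of the
positive torus under the monomial map `v ↦ (exp(−⟨aᵢ, v⟩))ᵢ`. -/
noncomputable def toricX {n m : ℕ} (A : Fin m → (Fin n → ℝ)) : Set (Fin m → ℝ) :=
  closure (Set.range fun v : Fin n → ℝ => fun i => Real.exp (-(∑ j, A i j * v j)))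

/-- The binomial variety `𝒵_𝒜 ⊆ ℝ≥0^𝒜`: nonnegative points `z` with `z^u = z^v`
whenever `u, v ∈ ℝ≥0^𝒜` satisfy `𝒜u = 𝒜v` (powers are `Real.rpow`, so `0^0 = 1`). -/
def binomialZ {n m : ℕ} (A : Fin m → (Fin n → ℝ)) : Set (Fin m → ℝ) :=
  {z | (∀ i, 0 ≤ z i) ∧ ∀ u v : Fin m → ℝ, (∀ i, 0 ≤ u i) → (∀ i, 0 ≤ v i) →
    (∑ i, u i • A i) = (∑ i, v i • A i) →
    (∏ i, (z i) ^ (u i)) = ∏ i, (z i) ^ (v i)}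

namespace ToricAux

open Filter Pointwise

variable {n m : ℕ}

lemma prod_rpow_exp (A : Fin m → Fin n → ℝ) (v : Fin n → ℝ) (u : Fin m → ℝ) :
    (∏ i, (Real.exp (-(∑ j, A i j * v j))) ^ (u i)) =
      Real.exp (-(∑ j, (∑ i, u i * A i j) * v j)) := by
  have h1 : ∀ i : Fin m, (Real.exp (-(∑ j, A i j * v j))) ^ (u i)
      = Real.exp ((-(∑ j, A i j * v j)) * u i) := fun i => by
    rw [Real.rpow_def_of_pos (Real.exp_pos _), Real.log_exp]
  simp_rw [h1, ← Real.exp_sum]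
  congr 1
  have h2 : ∀ i : Fin m, (-(∑ j, A i j * v j)) * u i = ∑ j, -(u i * A i j * v j) := by
    intro i
    rw [neg_mul, Finset.sum_mul, ← Finset.sum_neg_distrib]
    exact Finset.sum_congr rfl fun j _ => by ring
  simp_rw [h2]
  rw [Finset.sum_comm, ← Finset.sum_neg_distrib]
  refine Finset.sum_congr rfl fun j _ => ?_
  rw [Finset.sum_mul, ← Finset.sum_neg_distrib]

lemma toricX_subset (A : Fin m → (Fin n → ℝ)) : toricX A ⊆ binomialZ A := by
  have hZc : IsClosed (binomialZ A) := by
    have hrepr : binomialZ A = {z : Fin m → ℝ | ∀ i, 0 ≤ z i} ∩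
        ⋂ (u : Fin m → ℝ) (v : Fin m → ℝ) (_ : ∀ i, 0 ≤ u i) (_ : ∀ i, 0 ≤ v i)
          (_ : (∑ i, u i • A i) = ∑ i, v i • A i),
          {z : Fin m → ℝ | (∏ i, (z i) ^ (u i)) = ∏ i, (z i) ^ (v i)} := by
      ext z
      simp only [binomialZ, Set.mem_setOf_eq, Set.mem_inter_iff, Set.mem_iInter]
    rw [hrepr]
    refine IsClosed.inter ?_ ?_
    · have : {z : Fin m → ℝ | ∀ i, 0 ≤ z i} = ⋂ i, {z : Fin m → ℝ | 0 ≤ z i} := by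
        ext; simp
      rw [this]
      exact isClosed_iInter fun i => isClosed_le continuous_const (continuous_apply i)
    · refine isClosed_iInter fun u => isClosed_iInter fun v => isClosed_iInter fun hu =>
        isClosed_iInter fun hv => isClosed_iInter fun _ => ?_
      exact isClosed_eq
        (continuous_finset_prod _ fun i _ =>
          (Real.continuous_rpow_const (hu i)).comp (continuous_apply i))
        (continuous_finset_prod _ fun i _ =>
          (Real.continuous_rpow_const (hv i)).comp (continuous_apply i))
  refine closure_minimal ?_ hZc
  rintro _ ⟨v, rfl⟩
  refine ⟨fun i => (Real.exp_pos _).le, fun u w hu hw h => ?_⟩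
  rw [prod_rpow_exp, prod_rpow_exp]
  have hco : ∀ j, (∑ i, u i * A i j) = ∑ i, w i * A i j := by
    intro j
    have := congrFun h j
    simpa [Finset.sum_apply, Pi.smul_apply, smul_eq_mul] using this
  rw [show (∑ j, (∑ i, u i * A i j) * v j) = ∑ j, (∑ i, w i * A i j) * v j from
    Finset.sum_congr rfl fun j _ => by rw [hco j]]

lemma binomialZ_subset (A : Fin m → (Fin n → ℝ)) : binomialZ A ⊆ toricX A := by
  rintro z ⟨hz0, hzb⟩
  classical
  set A' : Fin m → (Fin n → ℝ) := fun i => if 0 < z i then A i else 0 with hA'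
  set c' : Fin m → ℝ := fun i => if 0 < z i then -Real.log (z i) else 0 with hc'
  set g : (Fin m → ℝ) →ₗ[ℝ] (Fin n → ℝ) := Fintype.linearCombination ℝ A' with hg
  set cL : (Fin m → ℝ) →ₗ[ℝ] ℝ := Fintype.linearCombination ℝ c' with hcL
  -- log of products with support in S = {i | 0 < z i}
  have hlog : ∀ (r : Fin m → ℝ), (∀ i, ¬ 0 < z i → r i = 0) →
      Real.log (∏ i, (z i) ^ (r i)) = ∑ i, r i * Real.log (z i) := by
    intro r hrS
    rw [Real.log_prod]
    · exact Finset.sum_congr rfl fun i _ => by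
        by_cases hi : 0 < z i
        · exact Real.log_rpow hi _
        · rw [hrS i hi, Real.rpow_zero, Real.log_one]; ring
    · intro i _
      by_cases hi : 0 < z i
      · exact (Real.rpow_pos_of_pos hi _).ne'
      · rw [hrS i hi, Real.rpow_zero]; exact one_ne_zero
  have hker : LinearMap.ker g ≤ LinearMap.ker cL := by
    intro u hu
    rw [LinearMap.mem_ker] at hu ⊢
    rw [hg, Fintype.linearCombination_apply] at hu
    set p : Fin m → ℝ := fun i => if 0 < z i then max (u i) 0 else 0 with hpdef
    set q : Fin m → ℝ := fun i => if 0 < z i then max (-u i) 0 else 0 with hqdef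
    have hp0 : ∀ i, 0 ≤ p i := fun i => by
      rw [hpdef]; dsimp only; split
      exacts [le_max_right _ _, le_refl 0]
    have hq0 : ∀ i, 0 ≤ q i := fun i => by
      rw [hqdef]; dsimp only; split
      exacts [le_max_right _ _, le_refl 0]
    have hpq : ∀ i, p i - q i = if 0 < z i then u i else 0 := fun i => by
      rw [hpdef, hqdef]; dsimp only; split
      · exact max_zero_sub_max_neg_zero_eq_self _
      · ring
    have hsum : (∑ i, p i • A i) = ∑ i, q i • A i := by
      have h4 : (∑ i, p i • A i) - (∑ i, q i • A i) = ∑ i, (p i - q i) • A i := by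
        rw [← Finset.sum_sub_distrib]
        exact Finset.sum_congr rfl fun i _ => (sub_smul _ _ _).symm
      have h5 : (∑ i, (p i - q i) • A i) = 0 := by
        rw [show (∑ i, (p i - q i) • A i) = ∑ i, u i • A' i from
          Finset.sum_congr rfl fun i _ => by
            rw [hpq i, hA']; dsimp only; split <;> simp]
        exact hu
      exact sub_eq_zero.mp (h4.trans h5)
    have hprod := hzb p q hp0 hq0 hsum
    have hps : ∀ i, ¬ 0 < z i → p i = 0 := fun i hi => by
      rw [hpdef]; dsimp only; rw [if_neg hi]
    have hqs : ∀ i, ¬ 0 < z i → q i = 0 := fun i hi => by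
      rw [hqdef]; dsimp only; rw [if_neg hi]
    have hlogs : (∑ i, p i * Real.log (z i)) = ∑ i, q i * Real.log (z i) := by
      rw [← hlog p hps, ← hlog q hqs, hprod]
    rw [hcL, Fintype.linearCombination_apply]
    have hterm : ∀ i : Fin m, u i • c' i = -((p i - q i) * Real.log (z i)) := by
      intro i
      rw [hpq i, hc']; dsimp only
      rw [smul_eq_mul]
      split <;> ring
    simp_rw [hterm]
    rw [Finset.sum_neg_distrib]
    simp_rw [sub_mul]
    rw [Finset.sum_sub_distrib, hlogs, sub_self, neg_zero]
  obtain ⟨Φ, hΦ⟩ := LinearMap.exists_extend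
    ((Submodule.liftQ (LinearMap.ker g) cL hker).comp (g.quotKerEquivRange.symm.toLinearMap))
  have hΦg : ∀ u, Φ (g u) = cL u := by
    intro u
    have h1 : Φ (g u) = (Φ.comp (LinearMap.range g).subtype)
        ⟨g u, LinearMap.mem_range_self g u⟩ := rfl
    rw [h1, hΦ, LinearMap.comp_apply]
    simp only [LinearEquiv.coe_coe]
    rw [LinearMap.quotKerEquivRange_symm_apply_image, Submodule.mkQ_apply, Submodule.liftQ_apply]
  have hgsingle : ∀ i : Fin m, g (fun k => if i = k then (1:ℝ) else 0) = A' i := by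
    intro i
    rw [hg, Fintype.linearCombination_apply]
    rw [show (∑ k, (if i = k then (1:ℝ) else 0) • A' k)
        = ∑ k, (if i = k then A' k else 0) from
      Finset.sum_congr rfl fun k _ => by split <;> simp]
    simp
  set x : Fin n → ℝ := fun j => Φ (fun k => if j = k then 1 else 0) with hxdef
  have hx : ∀ i, 0 < z i → (∑ j, A i j * x j) = -Real.log (z i) := by
    intro i hi
    have hΦA : Φ (A i) = ∑ j, A i j * x j := by
      rw [LinearMap.pi_apply_eq_sum_univ Φ (A i)]
      exact Finset.sum_congr rfl fun j _ => by rw [smul_eq_mul, hxdef]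
    have hAg : A i = g (fun k => if i = k then (1:ℝ) else 0) := by
      rw [hgsingle i, hA']; dsimp only; rw [if_pos hi]
    rw [← hΦA, hAg, hΦg, hcL, Fintype.linearCombination_apply]
    rw [show (∑ k, (if i = k then (1:ℝ) else 0) • c' k)
        = ∑ k, (if i = k then c' k else 0) from
      Finset.sum_congr rfl fun k _ => by split <;> simp]
    simp [hc', hi]
  -- Step B : the direction of degeneration
  have hW : ∃ w : Fin n → ℝ, (∀ i, 0 < z i → (∑ j, A i j * w j) = 0) ∧
      (∀ i, ¬ 0 < z i → 0 < ∑ j, A i j * w j) := by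
    by_cases hT : ∀ i, 0 < z i
    · exact ⟨0, fun i _ => by simp, fun i hi => absurd (hT i) hi⟩
    obtain ⟨i0, hi0⟩ := not_forall.mp hT
    set Δ : Set (Fin m → ℝ) :=
      {u | (∀ i, 0 ≤ u i) ∧ (∀ i, 0 < z i → u i = 0) ∧ (∑ i, u i) = 1} with hΔ
    set gA : (Fin m → ℝ) →ₗ[ℝ] (Fin n → ℝ) := Fintype.linearCombination ℝ A with hgA
    have hgAc : Continuous gA := gA.continuous_of_finiteDimensional
    have hΔclosed : IsClosed Δ := by
      have hrepr : Δ = (⋂ i, {u : Fin m → ℝ | 0 ≤ u i}) ∩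
          ((⋂ i, {u : Fin m → ℝ | 0 < z i → u i = 0}) ∩
            {u : Fin m → ℝ | (∑ i, u i) = 1}) := by
        ext u
        simp only [hΔ, Set.mem_setOf_eq, Set.mem_inter_iff, Set.mem_iInter]
      rw [hrepr]
      refine (isClosed_iInter fun i => isClosed_le continuous_const (continuous_apply i)).inter
        (IsClosed.inter (isClosed_iInter fun i => ?_)
          (isClosed_eq (continuous_finset_sum _ fun i _ => continuous_apply i) continuous_const))
      by_cases hi : 0 < z i
      · have : {u : Fin m → ℝ | 0 < z i → u i = 0} = {u : Fin m → ℝ | u i = 0} := by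
          ext; simp [hi]
        rw [this]
        exact isClosed_eq (continuous_apply i) continuous_const
      · have : {u : Fin m → ℝ | 0 < z i → u i = 0} = Set.univ := by
          ext; simp [hi]
        rw [this]; exact isClosed_univ
    have hΔsub : Δ ⊆ Metric.closedBall 0 1 := by
      intro u hu
      rw [Metric.mem_closedBall, dist_zero_right, pi_norm_le_iff_of_nonneg zero_le_one]
      intro i
      rw [Real.norm_eq_abs, abs_of_nonneg (hu.1 i)]
      calc u i ≤ ∑ k, u k := Finset.single_le_sum (fun k _ => hu.1 k) (Finset.mem_univ i)
        _ = 1 := hu.2.2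
    have hΔcomp : IsCompact Δ := (isCompact_closedBall 0 1).of_isClosed_subset hΔclosed hΔsub
    have hΔconv : Convex ℝ Δ := by
      intro u hu v hv a b ha hb hab
      refine ⟨fun i => add_nonneg (mul_nonneg ha (hu.1 i)) (mul_nonneg hb (hv.1 i)),
        fun i hi => by simp [hu.2.1 i hi, hv.2.1 i hi], ?_⟩
      simp only [Pi.add_apply, Pi.smul_apply, smul_eq_mul]
      rw [Finset.sum_add_distrib, ← Finset.mul_sum, ← Finset.mul_sum, hu.2.2, hv.2.2]
      simpa using hab
    have hsingleΔ : ∀ j, ¬ 0 < z j → (fun k => if j = k then (1:ℝ) else 0) ∈ Δ := by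
      intro j hj
      refine ⟨fun i => by dsimp only; split <;> norm_num, fun i hi => ?_, by simp⟩
      have : j ≠ i := fun h => hj (h ▸ hi)
      simp [this]
    have hgA_single : ∀ j : Fin m, gA (fun k => if j = k then (1:ℝ) else 0) = A j := by
      intro j
      rw [hgA, Fintype.linearCombination_apply]
      rw [show (∑ k, (if j = k then (1:ℝ) else 0) • A k)
          = ∑ k, (if j = k then A k else 0) from
        Finset.sum_congr rfl fun k _ => by split <;> simp]
      simp
    set Q : Set (Fin n → ℝ) := gA '' Δ with hQ
    have hQcomp : IsCompact Q := hΔcomp.image hgAc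
    have hQconv : Convex ℝ Q := hΔconv.linear_image gA
    set Lset : Set (Fin n → ℝ) := ↑(LinearMap.range g) with hL
    have hLclosed : IsClosed Lset := Submodule.closed_of_finiteDimensional _
    set K : Set (Fin n → ℝ) := Lset +ᵥ Q with hK
    have hKclosed : IsClosed K := hLclosed.vadd_right_of_isCompact hQcomp
    have hKadd : K = Lset + Q := rfl
    have hKconv : Convex ℝ K := by
      rw [hKadd]
      exact ((LinearMap.range g).convex).add hQconv
    have h0K : (0 : Fin n → ℝ) ∉ K := by
      rw [hKadd]
      rintro ⟨l, hl, qq, hqq, hsum0⟩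
      obtain ⟨μ, hμ⟩ := hl
      obtain ⟨u, huΔ, hu⟩ := hqq
      set p : Fin m → ℝ := fun i => if 0 < z i then max (μ i) 0 else u i with hpdef
      set q : Fin m → ℝ := fun i => if 0 < z i then max (-μ i) 0 else 0 with hqdef
      have hp0 : ∀ i, 0 ≤ p i := fun i => by
        rw [hpdef]; dsimp only; split
        exacts [le_max_right _ _, huΔ.1 i]
      have hq0 : ∀ i, 0 ≤ q i := fun i => by
        rw [hqdef]; dsimp only; split
        exacts [le_max_right _ _, le_refl 0]
      have hsum : (∑ i, p i • A i) = ∑ i, q i • A i := by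
        have h4 : (∑ i, p i • A i) - (∑ i, q i • A i) = ∑ i, (p i - q i) • A i := by
          rw [← Finset.sum_sub_distrib]
          exact Finset.sum_congr rfl fun i _ => (sub_smul _ _ _).symm
        have h5 : (∑ i, (p i - q i) • A i) = g μ + gA u := by
          rw [hg, hgA, Fintype.linearCombination_apply, Fintype.linearCombination_apply,
            ← Finset.sum_add_distrib]
          refine Finset.sum_congr rfl fun i _ => ?_
          by_cases hi : 0 < z i
          · rw [hpdef, hqdef, hA']; dsimp only
            rw [if_pos hi, if_pos hi, if_pos hi, huΔ.2.1 i hi,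
              max_zero_sub_max_neg_zero_eq_self]
            simp
          · rw [hpdef, hqdef, hA']; dsimp only
            rw [if_neg hi, if_neg hi, if_neg hi]
            simp
        have h6 : (∑ i, (p i - q i) • A i) = 0 := by rw [h5, hμ, hu]; exact hsum0
        exact sub_eq_zero.mp (h4.trans h6)
      have hprod := hzb p q hp0 hq0 hsum
      have hqpos : 0 < ∏ i, (z i) ^ (q i) := by
        refine Finset.prod_pos fun i _ => ?_
        by_cases hi : 0 < z i
        · exact Real.rpow_pos_of_pos hi _
        · rw [hqdef]; dsimp only; rw [if_neg hi, Real.rpow_zero]; norm_num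
      obtain ⟨j, hj⟩ : ∃ j, 0 < u j := by
        by_contra hcon
        push_neg at hcon
        have hzero : (∑ i, u i) = 0 :=
          Finset.sum_eq_zero fun i _ => le_antisymm (hcon i) (huΔ.1 i)
        rw [huΔ.2.2] at hzero; norm_num at hzero
      have hjS : ¬ 0 < z j := fun h => by
        rw [huΔ.2.1 j h] at hj; exact lt_irrefl 0 hj
      have hzj : z j = 0 := le_antisymm (not_lt.mp hjS) (hz0 j)
      have hzero : (∏ i, (z i) ^ (p i)) = 0 := by
        refine Finset.prod_eq_zero (Finset.mem_univ j) ?_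
        rw [hpdef]; dsimp only; rw [if_neg hjS, hzj, Real.zero_rpow hj.ne']
      rw [hzero] at hprod
      rw [← hprod] at hqpos
      exact lt_irrefl 0 hqpos
    obtain ⟨f, s0, hfK, hf0⟩ := geometric_hahn_banach_closed_point hKconv hKclosed h0K
    rw [map_zero] at hf0
    have hfL : ∀ l ∈ LinearMap.range g, f l = 0 := by
      intro l hl
      by_contra hne
      have hq0Q : gA (fun k => if i0 = k then (1:ℝ) else 0) ∈ Q :=
        ⟨_, hsingleΔ i0 hi0, rfl⟩
      set q0 : Fin n → ℝ := gA (fun k => if i0 = k then (1:ℝ) else 0) with hq0def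
      have hmem : ∀ t : ℝ, (t • l) + q0 ∈ K := by
        intro t
        rw [hKadd]
        exact Set.add_mem_add (Submodule.smul_mem _ t hl) hq0Q
      have hlt : ∀ t : ℝ, t * f l + f q0 < s0 := fun t => by
        have := hfK _ (hmem t)
        simpa [map_add, map_smul, smul_eq_mul] using this
      have := hlt ((s0 - f q0) / f l)
      rw [div_mul_cancel₀ _ hne] at this
      linarith
    have hfneg : ∀ j, ¬ 0 < z j → f (A j) < s0 := by
      intro j hj
      have h0A : (0 : Fin n → ℝ) + A j ∈ Lset + Q :=
        Set.add_mem_add (Submodule.zero_mem _) ⟨_, hsingleΔ j hj, hgA_single j⟩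
      rw [zero_add] at h0A
      exact hfK _ h0A
    refine ⟨fun j => -f (fun k => if j = k then 1 else 0), ?_, ?_⟩
    · intro i hi
      have hAi : (∑ j, A i j * -f (fun k => if j = k then (1:ℝ) else 0)) = -f (A i) := by
        rw [show f (A i) = f.toLinearMap (A i) from rfl,
          LinearMap.pi_apply_eq_sum_univ f.toLinearMap (A i), ← Finset.sum_neg_distrib]
        exact Finset.sum_congr rfl fun j _ => by
          rw [smul_eq_mul, ← mul_neg]; rfl
      rw [hAi]
      have hmem : A i ∈ LinearMap.range g :=
        ⟨(fun k => if i = k then 1 else 0), by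
          rw [hgsingle i, hA']; dsimp only; rw [if_pos hi]⟩
      rw [hfL _ hmem, neg_zero]
    · intro i hi
      have hAi : (∑ j, A i j * -f (fun k => if j = k then (1:ℝ) else 0)) = -f (A i) := by
        rw [show f (A i) = f.toLinearMap (A i) from rfl,
          LinearMap.pi_apply_eq_sum_univ f.toLinearMap (A i), ← Finset.sum_neg_distrib]
        exact Finset.sum_congr rfl fun j _ => by
          rw [smul_eq_mul, ← mul_neg]; rfl
      rw [hAi]
      have := hfneg i hi
      linarith
  obtain ⟨w, hw0, hwpos⟩ := hW
  have hz0' : ∀ i, ¬ 0 < z i → z i = 0 := fun i hi => le_antisymm (not_lt.mp hi) (hz0 i)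
  have htend : Filter.Tendsto
      (fun k : ℕ => fun i => Real.exp (-(∑ j, A i j * (x j + (k:ℝ) * w j))))
      Filter.atTop (nhds z) := by
    rw [tendsto_pi_nhds]
    intro i
    have hsplit : ∀ k : ℝ, (∑ j, A i j * (x j + k * w j))
        = (∑ j, A i j * x j) + k * (∑ j, A i j * w j) := by
      intro k
      rw [Finset.mul_sum, ← Finset.sum_add_distrib]
      exact Finset.sum_congr rfl fun j _ => by ring
    simp_rw [hsplit]
    by_cases hi : 0 < z i
    · rw [hw0 i hi, hx i hi]
      have hconst : ∀ k : ℕ, Real.exp (-(-Real.log (z i) + (k:ℝ) * 0)) = z i := by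
        intro k
        rw [mul_zero, add_zero, neg_neg, Real.exp_log hi]
      simp_rw [hconst]
      exact tendsto_const_nhds
    · rw [hz0' i hi]
      have hd := hwpos i hi
      have h2 : Tendsto (fun k : ℕ => (∑ j, A i j * x j) + (k:ℝ) * (∑ j, A i j * w j))
          atTop atTop :=
        tendsto_atTop_add_const_left _ _
          ((tendsto_natCast_atTop_atTop (R := ℝ)).atTop_mul_const hd)
      exact Real.tendsto_exp_atBot.comp (Filter.tendsto_neg_atTop_atBot.comp h2)
  exact mem_closure_of_tendsto htend (Filter.Eventually.of_forall fun k => ⟨_, rfl⟩)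

end ToricAux

/-- For a finite `𝒜 ⊆ M`, the irrational affine toric variety `X_𝒜` equals the binomial
variety `𝒵_𝒜`. -/
theorem toricX_eq_binomialZ {n m : ℕ} (A : Fin m → (Fin n → ℝ)) :
    toricX A = binomialZ A :=
  Set.Subset.antisymm (ToricAux.toricX_subset A) (ToricAux.binomialZ_subset A)
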